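/- Let R be a commutative noetherian ring, a a proper ideal, and J an injective R-module that is a-torsion and satisfies Ass_R(J) ⊆ V(a). Then J, with its induced R̂-module structure (R̂ the a-adic completion), is an injective R̂-module. -/

import Mathlib

set_option linter.unusedSectionVars false
set_option linter.unusedVariables false
set_option maxHeartbeats 1000000

noncomputable section
universe u

/-- `M` is `a`-torsion: every element is annihilated by a power of `a`. -/
def IsAdicTorsion (R : Type u) [CommRing R] (a : Ideal R) (M : Type u)
    [AddCommGroup M] [Module R M] : Prop :=
  ∀ x : M, ∃ n : ℕ, ∀ r ∈ a ^ n, r • x = 0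

namespace AdicInjAux

open AdicCompletion

variable {R : Type u} [CommRing R] [IsNoetherianRing R] (a : Ideal R)
variable {J : Type u} [AddCommGroup J] [Module R J]


theorem smul_top_ideal (n : ℕ) : (a ^ n • ⊤ : Ideal R) = a ^ n := by ext x; simp

/-- The ideal of elements of the completion whose `n`-th component vanishes. -/
def kerval (n : ℕ) : Ideal (AdicCompletion a R) where
  carrier := {x | x.val n = 0}
  add_mem' {x y} hx hy := by
    show (x + y).val n = 0
    rw [val_add_apply, hx, hy, add_zero]
  zero_mem' := rfl
  smul_mem' c x hx := by
    show (c * x).val n = 0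
    rw [val_mul, hx, mul_zero]

theorem mem_kerval {n : ℕ} {x : AdicCompletion a R} : x ∈ kerval a n ↔ x.val n = 0 := Iff.rfl

theorem kerval_anti {m n : ℕ} (h : m ≤ n) : kerval a n ≤ kerval a m := by
  intro x hx
  rw [mem_kerval] at hx ⊢
  rw [← x.property h, hx, _root_.map_zero]

theorem algebraMap_mem_kerval {n : ℕ} {r : R} (hr : r ∈ a ^ n) :
    algebraMap R (AdicCompletion a R) r ∈ kerval a n := by
  rw [mem_kerval]
  show (Submodule.Quotient.mk r : R ⧸ (a ^ n • ⊤ : Submodule R R)) = 0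
  rw [Submodule.Quotient.mk_eq_zero]
  exact (smul_top_ideal a n).ge hr

theorem exists_lift_of_kerval {p : ℕ} (m : ℕ) (hpm : p ≤ m) {x : AdicCompletion a R}
    (hx : x ∈ kerval a p) : ∃ r ∈ a ^ p, Submodule.Quotient.mk r = x.val m := by
  obtain ⟨r, hr⟩ := Submodule.Quotient.mk_surjective _ (x.val m)
  have h0 : Submodule.Quotient.mk (p := (a ^ p • ⊤ : Submodule R R)) r = 0 := by
    rw [← (show transitionMap a R hpm (Submodule.Quotient.mk r) = Submodule.Quotient.mk r from rfl), hr, x.property hpm]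
    exact hx
  exact ⟨r, (smul_top_ideal a p).le ((Submodule.Quotient.mk_eq_zero _).mp h0), hr⟩

theorem kerval_mul {p q : ℕ} {x y : AdicCompletion a R} (hx : x ∈ kerval a p)
    (hy : y ∈ kerval a q) : x * y ∈ kerval a (p + q) := by
  obtain ⟨r, hr, hrx⟩ := exists_lift_of_kerval a (p + q) (Nat.le_add_right p q) hx
  obtain ⟨s, hs, hsy⟩ := exists_lift_of_kerval a (p + q) (Nat.le_add_left q p) hy
  rw [mem_kerval, val_mul, ← hrx, ← hsy, Ideal.Quotient.mk_eq_mk, Ideal.Quotient.mk_eq_mk,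
    ← map_mul, ← Ideal.Quotient.mk_eq_mk, Submodule.Quotient.mk_eq_zero]
  exact (smul_top_ideal a (p + q)).ge (pow_add a p q ▸ Ideal.mul_mem_mul hr hs)

section Noetherian

variable (II : Ideal (AdicCompletion a R))

/-- The filtration of "leading coefficient" ideals of `II`. -/
def leadF : a.Filtration R where
  N n := Ideal.comap (algebraMap R (AdicCompletion a R)) ((II ⊓ kerval a n) ⊔ kerval a (n + 1))
  mono n := by
    refine Ideal.comap_mono (sup_le_sup ?_ ?_)
    · exact inf_le_inf le_rfl (kerval_anti a (Nat.le_succ n))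
    · exact kerval_anti a (Nat.le_succ (n + 1))
  smul_le n := by
    refine Submodule.smul_le.mpr fun s hs r hr => ?_
    have hr' : algebraMap R (AdicCompletion a R) r ∈ (II ⊓ kerval a n) ⊔ kerval a (n + 1) := hr
    rw [smul_eq_mul]
    obtain ⟨z, hz, w, hw, hzw⟩ := Submodule.mem_sup.mp hr'
    refine Ideal.mem_comap.mpr ?_
    have hA : algebraMap R (AdicCompletion a R) (s * r)
        = algebraMap R (AdicCompletion a R) s * z + algebraMap R (AdicCompletion a R) s * w := by
      rw [map_mul, ← hzw, mul_add]
    have hAs : algebraMap R (AdicCompletion a R) s ∈ kerval a 1 :=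
      algebraMap_mem_kerval a (by rwa [pow_one])
    rw [hA]
    refine Submodule.add_mem _ (Submodule.mem_sup_left ?_) (Submodule.mem_sup_right ?_)
    · exact ⟨Ideal.mul_mem_left _ _ hz.1, by
        have := kerval_mul a hAs hz.2
        rwa [add_comm 1 n] at this⟩
    · have := kerval_mul a hAs hw
      rwa [add_comm 1 (n + 1)] at this
  
theorem leadF_le_pow {n : ℕ} {r : R} (hr : r ∈ (leadF a II).N n) : r ∈ a ^ n := by
  have h1 : algebraMap R (AdicCompletion a R) r ∈ kerval a n := by
    have h2 : (II ⊓ kerval a n) ⊔ kerval a (n + 1) ≤ kerval a n :=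
      sup_le inf_le_right (kerval_anti a (Nat.le_succ n))
    exact h2 hr
  rw [mem_kerval] at h1
  have : (Submodule.Quotient.mk r : R ⧸ (a ^ n • ⊤ : Submodule R R)) = 0 := h1
  rw [Submodule.Quotient.mk_eq_zero] at this
  exact (smul_top_ideal a n).le this

theorem leadF_stable : (leadF a II).Stable := by
  refine (Ideal.stableFiltration_stable a ⊤).of_le fun n => ?_
  intro r hr
  simp only [Ideal.stableFiltration_N]
  rw [smul_top_ideal]
  exact leadF_le_pow a II hr

end Noetherian

theorem mulmk {n : ℕ} (c : R) (q : R ⧸ (a ^ n • ⊤ : Submodule R R)) :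
    Ideal.Quotient.mk (a ^ n • ⊤ : Ideal R) c * q = c • q := by
  induction q using Quotient.inductionOn' with
  | h t =>
      show _ * Submodule.Quotient.mk t = _
      rw [Ideal.Quotient.mk_eq_mk, ← map_mul, ← Ideal.Quotient.mk_eq_mk]
      show Submodule.Quotient.mk (c * t) = c • Submodule.Quotient.mk t
      exact Submodule.Quotient.mk_smul _ c t

theorem II_fg (II : Ideal (AdicCompletion a R)) : II.FG := by
  obtain ⟨n₀, hn₀⟩ := (leadF_stable a II).exists_pow_smul_eq
  obtain ⟨T, hT⟩ := IsNoetherian.noetherian ((leadF a II).N n₀)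
  classical
  -- witnesses for the generators of the leading ideal
  have hwit : ∀ j : ↥T, ∃ z w : AdicCompletion a R,
      (z ∈ II ∧ z ∈ kerval a n₀) ∧ w ∈ kerval a (n₀ + 1) ∧
      z + w = algebraMap R (AdicCompletion a R) (j : R) := by
    intro j
    have hj : (j : R) ∈ (leadF a II).N n₀ := by rw [← hT]; exact Ideal.subset_span j.2
    obtain ⟨z, hz, w, hw, hzw⟩ := Submodule.mem_sup.mp (Ideal.mem_comap.mp hj)
    exact ⟨z, w, hz, hw, hzw⟩
  choose x w hxmem hwK hxw using hwit
  have hxII : ∀ j, x j ∈ II := fun j => (hxmem j).1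
  have hxK : ∀ j, x j ∈ kerval a n₀ := fun j => (hxmem j).2
  -- one approximation step
  have step : ∀ (m : ℕ) (z : AdicCompletion a R), z ∈ II → z ∈ kerval a (n₀ + m) →
      ∃ u : ↥T → R, (∀ j, u j ∈ a ^ m) ∧
        (z - ∑ j, algebraMap R (AdicCompletion a R) (u j) * x j) ∈ II ∧
        (z - ∑ j, algebraMap R (AdicCompletion a R) (u j) * x j) ∈ kerval a (n₀ + m + 1) := by
    intro m z hzI hzK
    obtain ⟨rl, hrl⟩ := Submodule.Quotient.mk_surjective _ (z.val (n₀ + m + 1))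
    have hAz : algebraMap R (AdicCompletion a R) rl - z ∈ kerval a (n₀ + m + 1) := by
      rw [mem_kerval, val_sub]
      show Submodule.Quotient.mk rl - z.val (n₀ + m + 1) = 0
      rw [hrl, sub_self]
    have hrlF : rl ∈ (leadF a II).N (n₀ + m) := by
      refine Ideal.mem_comap.mpr (Submodule.mem_sup.mpr
        ⟨z, ⟨hzI, hzK⟩, algebraMap R (AdicCompletion a R) rl - z, hAz, by ring⟩)
    rw [hn₀ m, ← hT,
      show (↑T : Set R) = Set.range (fun j : ↥T => (j : R)) from (Subtype.range_coe).symm]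
      at hrlF
    obtain ⟨ν, hν, hsum⟩ := (Submodule.mem_ideal_smul_span_iff_exists_sum _ _ _).mp hrlF
    refine ⟨fun j => ν j, fun j => hν j, ?_, ?_⟩
    · exact Submodule.sub_mem _ hzI (Submodule.sum_mem _ fun j _ =>
        Ideal.mul_mem_left _ _ (hxII j))
    · have hrl2 : rl = ∑ j : ↥T, ν j * (j : R) := by
        rw [← hsum, Finsupp.sum_fintype ν (fun i c => c • (i : R)) (fun i => zero_smul R _)]
        rfl
      have hArl : algebraMap R (AdicCompletion a R) rl
          = ∑ j : ↥T, algebraMap R (AdicCompletion a R) (ν j) * (x j + w j) := by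
        rw [hrl2, map_sum]
        refine Finset.sum_congr rfl fun j _ => ?_
        rw [map_mul, hxw j]
      have hsplit : ∑ j : ↥T, algebraMap R (AdicCompletion a R) (ν j) * (x j + w j)
          = ∑ j : ↥T, algebraMap R (AdicCompletion a R) (ν j) * x j
            + ∑ j : ↥T, algebraMap R (AdicCompletion a R) (ν j) * w j := by
        rw [← Finset.sum_add_distrib]
        exact Finset.sum_congr rfl fun j _ => mul_add _ _ _
      have hkey : z - ∑ j, algebraMap R (AdicCompletion a R) (ν j) * x j
          = (z - algebraMap R (AdicCompletion a R) rl)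
            + ∑ j : ↥T, algebraMap R (AdicCompletion a R) (ν j) * w j := by
        rw [hArl, hsplit]; ring
      rw [hkey]
      refine Submodule.add_mem _ ?_ (Submodule.sum_mem _ fun j _ => ?_)
      · rw [show z - algebraMap R (AdicCompletion a R) rl
          = -(algebraMap R (AdicCompletion a R) rl - z) from by ring]
        exact Submodule.neg_mem _ hAz
      · have := kerval_mul a (algebraMap_mem_kerval a (hν j)) (hwK j)
        rwa [show m + (n₀ + 1) = n₀ + m + 1 from by omega] at this
  -- main approximation claim
  have main : ∀ y : AdicCompletion a R, y ∈ II → y ∈ kerval a n₀ →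
      y ∈ Ideal.span (Set.range x) := by
    choose uF hu1 hu2 hu3 using step
    intro y hyI hyK
    let zs : ∀ m : ℕ, {z : AdicCompletion a R // z ∈ II ∧ z ∈ kerval a (n₀ + m)} :=
      fun m => Nat.rec ⟨y, hyI, hyK⟩
        (fun m ih =>
          ⟨ih.1 - ∑ j, algebraMap R (AdicCompletion a R) (uF m ih.1 ih.2.1 ih.2.2 j) * x j,
            hu2 m ih.1 ih.2.1 ih.2.2, hu3 m ih.1 ih.2.1 ih.2.2⟩) m
    let uu : ℕ → ↥T → R := fun m => uF m (zs m).1 (zs m).2.1 (zs m).2.2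
    have zs_succ : ∀ m, (zs (m + 1)).1
        = (zs m).1 - ∑ j, algebraMap R (AdicCompletion a R) (uu m j) * x j := fun m => rfl
    have huu : ∀ m j, uu m j ∈ a ^ m := fun m => hu1 m _ _ _
    let P : ℕ → ↥T → R := fun m j => ∑ i ∈ Finset.range m, uu i j
    have hPz : ∀ m, (zs m).1 = y - ∑ j, algebraMap R (AdicCompletion a R) (P m j) * x j := by
      intro m
      induction m with
      | zero =>
          show y = y - ∑ j, algebraMap R (AdicCompletion a R) (P 0 j) * x j
          have : ∀ j : ↥T, algebraMap R (AdicCompletion a R) (P 0 j) * x j = 0 := by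
            intro j
            show algebraMap R (AdicCompletion a R) (∑ i ∈ Finset.range 0, uu i j) * x j = 0
            rw [Finset.sum_range_zero, _root_.map_zero, zero_mul]
          rw [Finset.sum_congr rfl (fun j _ => this j), Finset.sum_const_zero, sub_zero]
      | succ m ih =>
          rw [zs_succ m, ih]
          have : ∀ j : ↥T, algebraMap R (AdicCompletion a R) (P (m + 1) j) * x j
              = algebraMap R (AdicCompletion a R) (P m j) * x j
                + algebraMap R (AdicCompletion a R) (uu m j) * x j := by
            intro j
            show algebraMap R (AdicCompletion a R) (∑ i ∈ Finset.range (m+1), uu i j) * x j = _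
            rw [Finset.sum_range_succ, map_add, add_mul]
          rw [Finset.sum_congr rfl (fun j _ => this j), Finset.sum_add_distrib]
          ring
    have hcau : ∀ j : ↥T, ∀ m, P m j ≡ P (m + 1) j [SMOD (a ^ m • ⊤ : Submodule R R)] := by
      intro j m
      rw [SModEq.sub_mem]
      have : P m j - P (m + 1) j = -(uu m j) := by
        show (∑ i ∈ Finset.range m, uu i j) - ∑ i ∈ Finset.range (m+1), uu i j = _
        rw [Finset.sum_range_succ]
        ring
      rw [this]
      exact Submodule.neg_mem _ ((smul_top_ideal a m).ge (huu m j))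
    let sc : ↥T → AdicCompletion a R := fun j =>
      AdicCompletion.mk a R (AdicCauchySequence.mk a R (fun m => P m j) (hcau j))
    have hsc : ∀ (j : ↥T) (N : ℕ), (sc j).val N = Submodule.Quotient.mk (P N j) := by
      intro j N
      rfl
    have hy : y = ∑ j, sc j * x j := by
      ext N
      have h2 : (zs N).1.val N = 0 := kerval_anti a (Nat.le_add_left N n₀) (zs N).2.2
      rw [hPz N] at h2
      rw [val_sub_apply] at h2
      have h3 : y.val N = (∑ j, algebraMap R (AdicCompletion a R) (P N j) * x j).val N :=
        (sub_eq_zero.mp h2).symm ▸ rfl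
      rw [sub_eq_zero] at h2
      rw [h2, val_sum_apply, val_sum_apply]
      refine Finset.sum_congr rfl fun j _ => ?_
      rw [val_mul, val_mul, hsc]
      rfl
    rw [hy]
    exact Submodule.sum_mem _ fun j _ =>
      Ideal.mul_mem_left _ _ (Ideal.subset_span (Set.mem_range_self j))
  -- head generators
  let W0 : Submodule R (R ⧸ (a ^ n₀ • ⊤ : Submodule R R)) :=
    Submodule.map (eval a R n₀) (Submodule.restrictScalars R II)
  obtain ⟨V, hV⟩ := IsNoetherian.noetherian W0
  have hlift : ∀ v : ↥V, ∃ z, z ∈ II ∧ eval a R n₀ z = (v : R ⧸ (a ^ n₀ • ⊤ : Submodule R R)) := by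
    intro v
    have hv : (v : R ⧸ (a ^ n₀ • ⊤ : Submodule R R)) ∈ W0 := by
      rw [← hV]; exact Submodule.subset_span v.2
    obtain ⟨z, hz, hze⟩ := hv
    exact ⟨z, hz, hze⟩
  choose wg hwgI hwge using hlift
  refine ⟨(Set.finite_range x).toFinset ∪ (Set.finite_range wg).toFinset, ?_⟩
  have hcoe : ((Set.finite_range x).toFinset ∪ (Set.finite_range wg).toFinset : Finset _)
      = (Set.range x ∪ Set.range wg : Set (AdicCompletion a R)) := by
    rw [Finset.coe_union, Set.Finite.coe_toFinset, Set.Finite.coe_toFinset]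
  rw [hcoe]
  apply le_antisymm
  · rw [Ideal.span_le]
    rintro t (⟨j, rfl⟩ | ⟨v, rfl⟩)
    · exact hxII j
    · exact hwgI v
  · intro z hz
    have hev : eval a R n₀ z ∈ W0 := ⟨z, hz, rfl⟩
    rw [← hV] at hev
    obtain ⟨c, -, hc⟩ := Submodule.mem_span_finset.mp hev
    set z' := z - ∑ v ∈ V.attach, algebraMap R (AdicCompletion a R) (c v) * wg v with hz'
    have hz'I : z' ∈ II := Submodule.sub_mem _ hz
      (Submodule.sum_mem _ fun v _ => Ideal.mul_mem_left _ _ (hwgI v))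
    have hz'K : z' ∈ kerval a n₀ := by
      rw [mem_kerval, hz', val_sub_apply, val_sum_apply, sub_eq_zero]
      have : ∀ v : ↥V, (algebraMap R (AdicCompletion a R) (c v) * wg v).val n₀
          = c (v : R ⧸ (a ^ n₀ • ⊤ : Submodule R R)) • (v : R ⧸ (a ^ n₀ • ⊤ : Submodule R R)) := by
        intro v
        rw [val_mul]
        have h5 : (algebraMap R (AdicCompletion a R) (c v)).val n₀
            = Ideal.Quotient.mk (a ^ n₀ • ⊤ : Ideal R) (c v) := rfl
        have h6 : (wg v).val n₀ = (v : R ⧸ (a ^ n₀ • ⊤ : Submodule R R)) := hwge v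
        rw [h5, h6, mulmk]
      rw [Finset.sum_congr rfl (fun v _ => this v), Finset.sum_attach V
        (fun q => c q • q)]
      exact hc.symm
    have hmem := main z' hz'I hz'K
    have : z = z' + ∑ v ∈ V.attach, algebraMap R (AdicCompletion a R) (c v) * wg v := by
      rw [hz']; ring
    rw [this]
    refine Submodule.add_mem _ (Ideal.span_mono Set.subset_union_left hmem)
      (Submodule.sum_mem _ fun v _ => Ideal.mul_mem_left _ _ ?_)
    exact Ideal.subset_span (Set.mem_union_right _ (Set.mem_range_self v))

theorem adic_noetherian : IsNoetherianRing (AdicCompletion a R) :=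
  isNoetherianRing_iff.mpr ⟨fun II => II_fg a II⟩


theorem kerval_le_map (n : ℕ) (x : AdicCompletion a R) (hx : x.val n = 0) :
    x ∈ (a ^ n).map (algebraMap R (AdicCompletion a R)) := by
  set P : Submodule R R := (a ^ n • ⊤ : Ideal R) with hP
  haveI : Module.Finite R P := Module.Finite.iff_fg.mpr (IsNoetherian.noetherian P)
  have h0 : map a P.mkQ x = 0 := by
    ext m
    rw [map_val_apply, val_zero_apply]
    obtain ⟨r, hr⟩ := Submodule.Quotient.mk_surjective _ (x.val m)
    rw [← hr, LinearMap.reduceModIdeal_apply, Submodule.Quotient.mk_eq_zero]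
    rcases le_total m n with hmn | hnm
    · have hxm : x.val m = 0 := by rw [← x.property hmn, hx, _root_.map_zero]
      have hrm : r ∈ (a ^ m • ⊤ : Submodule R R) := by
        rwa [← Submodule.Quotient.mk_eq_zero, hr]
      have h2 : P.mkQ r ∈ Submodule.map P.mkQ (a ^ m • ⊤ : Submodule R R) :=
        Submodule.mem_map_of_mem hrm
      rwa [Submodule.map_smul'', Submodule.map_top, Submodule.range_mkQ] at h2
    · have hxn : Submodule.Quotient.mk (p := (a ^ n • ⊤ : Submodule R R)) r = 0 := by
        rw [← (show transitionMap a R hnm (Submodule.Quotient.mk r) = Submodule.Quotient.mk r from rfl), hr, x.property hnm, hx]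
      have hrP : r ∈ P := by rw [hP]; exact (Submodule.Quotient.mk_eq_zero _).mp hxn
      have h3 : P.mkQ r = 0 := by rwa [Submodule.mkQ_apply, Submodule.Quotient.mk_eq_zero]
      rw [h3]
      exact Submodule.zero_mem _
  have hex := AdicCompletion.map_exact (Submodule.injective_subtype P)
    (LinearMap.exact_subtype_mkQ P) (Submodule.mkQ_surjective P) (I := a)
  obtain ⟨y, hy⟩ := (hex x).mp h0
  obtain ⟨t, rfl⟩ := ofTensorProduct_surjective_of_finite a (↥P) y
  rw [← LinearMap.comp_apply, ofTensorProduct_naturality a (P.subtype),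
    LinearMap.comp_apply] at hy
  rw [← hy]
  clear hy
  induction t using TensorProduct.induction_on with
  | zero => rw [_root_.map_zero, _root_.map_zero]; exact Submodule.zero_mem _
  | tmul c m =>
      rw [TensorProduct.AlgebraTensorModule.map_tmul, ofTensorProduct_tmul]
      show c • (of a R) (m : R) ∈ _
      have h2 : c • (of a R) (m : R) = c * algebraMap R (AdicCompletion a R) (m : R) := rfl
      rw [h2]
      refine Ideal.mul_mem_left _ c (Ideal.mem_map_of_mem _ ?_)
      exact (smul_top_ideal a n).le m.2
  | add u v hu hv => rw [map_add, map_add]; exact Submodule.add_mem _ hu hv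


theorem mem_ideal_smul_top {S' : Type u} [CommRing S'] {I : Ideal S'} {t : S'} (ht : t ∈ I) :
    t ∈ (I • ⊤ : Submodule S' S') := by
  have h := Submodule.smul_mem_smul ht (Submodule.mem_top (x := (1 : S')))
  simpa using h

theorem chi_kill (χ : AdicCompletion a R →ₐ[R] Module.End R J) (n : ℕ)
    (t : AdicCompletion a R)
    (ht : t ∈ (a ^ n).map (algebraMap R (AdicCompletion a R)))
    (y : J) (hy : ∀ r ∈ a ^ n, r • y = 0) : χ t y = 0 := by
  refine Submodule.span_induction ?_ ?_ ?_ ?_ ht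
  · rintro _ ⟨r, hr, rfl⟩
    rw [χ.commutes, Module.algebraMap_end_apply]
    exact hy r hr
  · rw [_root_.map_zero]; rfl
  · intro u v _ _ hu hv
    rw [map_add]
    show χ u y + χ v y = 0
    rw [hu, hv, add_zero]
  · intro s u _ hu
    rw [smul_eq_mul, map_mul, Module.End.mul_apply, hu, _root_.map_zero]

theorem injective_over_adicCompletion'
    (ha : a ≠ ⊤)
    (hinj : Module.Injective R J)
    (htor : ∀ x : J, ∃ n : ℕ, ∀ r ∈ a ^ n, r • x = 0)
    (hass : ∀ p ∈ associatedPrimes R J, a ≤ p) :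
    ∀ χ : AdicCompletion a R →ₐ[R] Module.End R J,
      letI : Module (AdicCompletion a R) J := Module.compHom J χ.toRingHom
      Module.Injective (AdicCompletion a R) J := by
  intro χ
  letI : Module (AdicCompletion a R) J := Module.compHom J χ.toRingHom
  haveI htower : IsScalarTower R (AdicCompletion a R) J := by
    refine ⟨fun r s y => ?_⟩
    show χ (r • s) y = r • (χ s y)
    rw [Algebra.smul_def, map_mul, χ.commutes, Module.End.mul_apply,
      Module.algebraMap_end_apply]
  haveI : IsNoetherianRing (AdicCompletion a R) := adic_noetherian a
  apply Module.Baer.injective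
  intro II f
  -- uniform torsion bound on the range of f
  have hrfg : (LinearMap.range f).FG := by
    rw [LinearMap.range_eq_map]
    exact Submodule.FG.map _ ((Submodule.fg_top II).mpr (IsNoetherian.noetherian II))
  obtain ⟨Y, hY⟩ := hrfg
  choose nJ hnJ using htor
  classical
  set N1 : ℕ := Y.attach.sup fun y => nJ y.1 with hN1
  have htorR : ∀ y ∈ LinearMap.range f, ∀ r ∈ a ^ N1, r • y = 0 := by
    intro y hy
    rw [← hY] at hy
    refine Submodule.span_induction ?_ ?_ ?_ ?_ hy
    · intro t ht r hr
      exact hnJ t r (Ideal.pow_le_pow_right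
        (Finset.le_sup (Finset.mem_attach Y ⟨t, ht⟩)) hr)
    · intro r _; rw [smul_zero]
    · intro u v _ _ hu hv r hr
      rw [smul_add, hu r hr, hv r hr, add_zero]
    · intro s u _ hu r hr
      have hcomm : r • (s • u) = s • (r • u) := by
        show r • (χ s u) = χ s (r • u)
        rw [map_smul]
      rw [hcomm, hu r hr, smul_zero]
  -- Artin-Rees over the completion
  set S := AdicCompletion a R with hS
  set Ah : Ideal S := a.map (algebraMap R S) with hAh
  obtain ⟨k, hk⟩ := Ideal.exists_pow_inf_eq_pow_smul Ah (II : Submodule S S)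
  set M0 : ℕ := k + N1 with hM0
  have hAhpow : ∀ m : ℕ, Ah ^ m = (a ^ m).map (algebraMap R S) := fun m =>
    (Ideal.map_pow _ _ _).symm
  have hkill : ∀ (z : ↥II), (z : S) ∈ (Ah ^ M0 • ⊤ : Submodule S S) → f z = 0 := by
    intro z hzmem
    have hzin : (z : S) ∈ (Ah ^ M0 • ⊤ ⊓ (II : Submodule S S) : Submodule S S) := ⟨hzmem, z.2⟩
    rw [hk M0 (Nat.le_add_right k N1), show M0 - k = N1 from by omega] at hzin
    set Q' : Submodule S ↥II :=
      Ah ^ N1 • (Submodule.comap II.subtype (Ah ^ k • ⊤ ⊓ (II : Submodule S S))) with hQ'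
    have hmap : Submodule.map II.subtype Q'
        = Ah ^ N1 • (Ah ^ k • ⊤ ⊓ (II : Submodule S S) : Submodule S S) := by
      rw [hQ', Submodule.map_smul'', Submodule.map_comap_subtype]
      exact congrArg _ (inf_eq_right.mpr inf_le_right)
    have hz2 : (z : S) ∈ Submodule.map II.subtype Q' := by rw [hmap]; exact hzin
    obtain ⟨z', hz', hzz⟩ := hz2
    have hzQ : z ∈ Q' := by
      have : z' = z := Subtype.ext hzz
      rwa [← this]
    refine Submodule.smul_induction_on hzQ ?_ ?_
    · intro t ht w _
      rw [map_smul]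
      show χ t (f w) = 0
      refine chi_kill a χ N1 t ?_ (f w) (htorR (f w) (LinearMap.mem_range_self f w))
      rwa [← hAhpow]
    · intro u v hu hv
      rw [map_add, hu, hv, add_zero]
  -- extend over R through the quotient R/a^M0
  set θ : ↥II →ₗ[R] (R ⧸ (a ^ M0 • ⊤ : Submodule R R)) :=
    (eval a R M0).comp ((II.subtype).restrictScalars R) with hθ
  set fR : ↥II →ₗ[R] J := f.restrictScalars R with hfR
  have hker : LinearMap.ker θ ≤ LinearMap.ker fR := by
    intro z hz
    have hzval : (z : S).val M0 = 0 := hz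
    have h1 : (z : S) ∈ (a ^ M0).map (algebraMap R S) := kerval_le_map a M0 _ hzval
    have h1' : (z : S) ∈ Ah ^ M0 := by rw [hAhpow]; exact h1
    exact hkill z (mem_ideal_smul_top h1')
  have hinjθ : Function.Injective ((LinearMap.ker θ).liftQ θ le_rfl) := by
    rw [← LinearMap.ker_eq_bot]
    exact Submodule.ker_liftQ_eq_bot _ _ _ le_rfl
  obtain ⟨h, hh⟩ := hinj.out ((LinearMap.ker θ).liftQ θ le_rfl) hinjθ
    ((LinearMap.ker θ).liftQ fR hker)
  set jel : J := h (Submodule.Quotient.mk 1) with hjel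
  have hjtor : ∀ r ∈ a ^ M0, r • jel = 0 := by
    intro r hr
    have h2 : r • jel = h (r • (Submodule.Quotient.mk 1 : R ⧸ (a ^ M0 • ⊤ : Submodule R R))) :=
      (map_smul h r _).symm
    have h3 : r • (Submodule.Quotient.mk (1 : R) : R ⧸ (a ^ M0 • ⊤ : Submodule R R)) = 0 := by
      rw [← Submodule.Quotient.mk_smul, Submodule.Quotient.mk_eq_zero]
      simpa using (smul_top_ideal a M0).ge hr
    rw [h2, h3, _root_.map_zero]
  refine ⟨LinearMap.toSpanSingleton S J jel, fun z hz => ?_⟩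
  -- compute both sides
  obtain ⟨r, hr⟩ := Submodule.Quotient.mk_surjective _ (z.val M0)
  have hfz : f ⟨z, hz⟩ = h (Submodule.Quotient.mk r) := by
    have h4 := hh (Submodule.Quotient.mk (p := LinearMap.ker θ) ⟨z, hz⟩)
    rw [Submodule.liftQ_apply, Submodule.liftQ_apply] at h4
    have h5 : θ ⟨z, hz⟩ = Submodule.Quotient.mk r := by
      rw [hθ]
      exact hr.symm
    rw [h5] at h4
    exact h4.symm
  have hrj : h (Submodule.Quotient.mk r) = r • jel := by
    have h6 : (Submodule.Quotient.mk r : R ⧸ (a ^ M0 • ⊤ : Submodule R R))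
        = r • Submodule.Quotient.mk 1 := by
      rw [← Submodule.Quotient.mk_smul]
      congr 1
      simp
    rw [h6, map_smul]
  have hzr : (z - algebraMap R S r) • jel = 0 := by
    have h7 : (z - algebraMap R S r).val M0 = 0 := by
      rw [val_sub_apply]
      have h8 : (algebraMap R S r).val M0
          = (Submodule.Quotient.mk r : R ⧸ (a ^ M0 • ⊤ : Submodule R R)) := rfl
      rw [h8, hr, sub_self]
    have h9 := kerval_le_map a M0 _ h7
    show χ (z - algebraMap R S r) jel = 0
    exact chi_kill a χ M0 _ h9 jel hjtor
  have hzsplit : z • jel = (algebraMap R S r) • jel + (z - algebraMap R S r) • jel := by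
    rw [← add_smul]
    congr 1
    ring
  have halg : (algebraMap R S r) • jel = r • jel := algebraMap_smul S r jel
  show z • jel = f ⟨z, hz⟩
  rw [hzsplit, hzr, add_zero, halg, hfz, hrj]

end AdicInjAux

/-- Let `R` be commutative noetherian, `a` a proper ideal, and `J` an injective `R`-module that
is `a`-torsion with `Ass_R(J) ⊆ V(a)`.  Then `J`, with its induced module structure over the
`a`-adic completion `R̂` (given by any `R`-algebra homomorphism `R̂ → End_R(J)`, which is
necessarily the canonical one), is an injective `R̂`-module. -/
theorem injective_over_adicCompletion
    (R : Type u) [CommRing R] [IsNoetherianRing R] (a : Ideal R) (ha : a ≠ ⊤)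
    (J : Type u) [AddCommGroup J] [Module R J]
    (hinj : Module.Injective R J)
    (htor : IsAdicTorsion R a J)
    (hass : ∀ p ∈ associatedPrimes R J, a ≤ p) :
    ∀ χ : AdicCompletion a R →ₐ[R] Module.End R J,
      letI : Module (AdicCompletion a R) J := Module.compHom J χ.toRingHom
      Module.Injective (AdicCompletion a R) J := by
  exact AdicInjAux.injective_over_adicCompletion' a ha hinj htor hass

end
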